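/- For any real function f on the vertices, the normalized L¹ gradient of f² is bounded by twice the normalized L² gradient of f: (∑_{u,v} |f(u)²−f(v)²| φ(u,v)) / (∑_u f(u)² π(u)) ≤ 2 (∑_{u,v} |f(u)−f(v)|² φ(u,v))^{1/2} / (∑_u f(u)² π(u))^{1/2}, provided f ≠ 0. -/
import Mathlib


open Finset

theorem grad_sq_L1_le_two_grad_L2 {V : Type*} [Fintype V]
    (K : V → V → ℝ) (π : V → ℝ)
    (hK0 : ∀ u v, 0 ≤ K u v) (hK1 : ∀ u, ∑ v, K u v = 1)
    (hπ : ∀ u, 0 < π u) (hπ1 : ∑ u, π u = 1)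
    (hstat : ∀ v, ∑ u, π u * K u v = π v)
    (f : V → ℝ) (hf : f ≠ 0) :
    (∑ u, ∑ v, |f u ^ 2 - f v ^ 2| * (K u v * π u)) / (∑ u, f u ^ 2 * π u)
      ≤ 2 * Real.sqrt (∑ u, ∑ v, |f u - f v| ^ 2 * (K u v * π u))
          / Real.sqrt (∑ u, f u ^ 2 * π u) := by
  have hφ : ∀ u v, 0 ≤ K u v * π u := fun u v => mul_nonneg (hK0 u v) (hπ u).le
  set D := ∑ u, f u ^ 2 * π u with hDdef
  have hDpos : 0 < D := by
    obtain ⟨u, hu⟩ : ∃ u, f u ≠ 0 := by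
      by_contra h; push_neg at h; exact hf (funext h)
    refine Finset.sum_pos' (fun i _ => mul_nonneg (sq_nonneg _) (hπ i).le)
      ⟨u, mem_univ u, mul_pos (by positivity) (hπ u)⟩
  set A := ∑ u, ∑ v, |f u - f v| ^ 2 * (K u v * π u) with hAdef
  have hA0 : 0 ≤ A :=
    Finset.sum_nonneg fun u _ => Finset.sum_nonneg fun v _ =>
      mul_nonneg (sq_nonneg _) (hφ u v)
  set N := ∑ u, ∑ v, |f u ^ 2 - f v ^ 2| * (K u v * π u) with hNdef
  set S := ∑ u, ∑ v, (f u + f v) ^ 2 * (K u v * π u) with hSdef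
  -- Cauchy–Schwarz : N ≤ √A * √S
  have hCS : N ≤ Real.sqrt A * Real.sqrt S := by
    have h := Real.sum_mul_le_sqrt_mul_sqrt (Finset.univ : Finset (V × V))
      (fun p => |f p.1 - f p.2| * Real.sqrt (K p.1 p.2 * π p.1))
      (fun p => |f p.1 + f p.2| * Real.sqrt (K p.1 p.2 * π p.1))
    have e1 : ∑ p : V × V, (|f p.1 - f p.2| * Real.sqrt (K p.1 p.2 * π p.1)) *
        (|f p.1 + f p.2| * Real.sqrt (K p.1 p.2 * π p.1)) = N := by
      rw [hNdef, Fintype.sum_prod_type]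
      refine Finset.sum_congr rfl fun u _ => Finset.sum_congr rfl fun v _ => ?_
      have : |f u ^ 2 - f v ^ 2| = |f u - f v| * |f u + f v| := by
        rw [← abs_mul]; ring_nf
      rw [this, show (|f u - f v| * Real.sqrt (K u v * π u)) *
          (|f u + f v| * Real.sqrt (K u v * π u))
          = |f u - f v| * |f u + f v| * (Real.sqrt (K u v * π u) * Real.sqrt (K u v * π u))
          by ring, Real.mul_self_sqrt (hφ u v)]
    have e2 : ∑ p : V × V, (|f p.1 - f p.2| * Real.sqrt (K p.1 p.2 * π p.1)) ^ 2 = A := by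
      rw [hAdef, Fintype.sum_prod_type]
      refine Finset.sum_congr rfl fun u _ => Finset.sum_congr rfl fun v _ => ?_
      rw [mul_pow, Real.sq_sqrt (hφ u v)]
    have e3 : ∑ p : V × V, (|f p.1 + f p.2| * Real.sqrt (K p.1 p.2 * π p.1)) ^ 2 = S := by
      rw [hSdef, Fintype.sum_prod_type]
      refine Finset.sum_congr rfl fun u _ => Finset.sum_congr rfl fun v _ => ?_
      rw [mul_pow, Real.sq_sqrt (hφ u v), sq_abs]
    rw [e1, e2, e3] at h
    exact h
  have hS4 : S ≤ 4 * D := by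
    have h1 : ∀ u v, (f u + f v) ^ 2 * (K u v * π u)
        ≤ (2 * f u ^ 2 + 2 * f v ^ 2) * (K u v * π u) := by
      intro u v
      refine mul_le_mul_of_nonneg_right ?_ (hφ u v)
      nlinarith [sq_nonneg (f u - f v)]
    have h2 : S ≤ ∑ u, ∑ v, (2 * f u ^ 2 + 2 * f v ^ 2) * (K u v * π u) :=
      Finset.sum_le_sum fun u _ => Finset.sum_le_sum fun v _ => h1 u v
    have h3 : ∑ u, ∑ v, (2 * f u ^ 2) * (K u v * π u) = 2 * D := by
      rw [Finset.mul_sum]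
      refine Finset.sum_congr rfl fun u _ => ?_
      have : ∑ v, (2 * f u ^ 2) * (K u v * π u)
          = (2 * f u ^ 2 * π u) * ∑ v, K u v := by
        rw [Finset.mul_sum]
        exact Finset.sum_congr rfl fun v _ => by ring
      rw [this, hK1 u]; ring
    have h4 : ∑ u, ∑ v, (2 * f v ^ 2) * (K u v * π u) = 2 * D := by
      rw [Finset.sum_comm, Finset.mul_sum]
      refine Finset.sum_congr rfl fun v _ => ?_
      have : ∑ u, (2 * f v ^ 2) * (K u v * π u)
          = (2 * f v ^ 2) * ∑ u, π u * K u v := by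
        rw [Finset.mul_sum]
        exact Finset.sum_congr rfl fun u _ => by ring
      rw [this, hstat v]; ring
    calc S ≤ ∑ u, ∑ v, (2 * f u ^ 2 + 2 * f v ^ 2) * (K u v * π u) := h2
      _ = (∑ u, ∑ v, (2 * f u ^ 2) * (K u v * π u))
          + ∑ u, ∑ v, (2 * f v ^ 2) * (K u v * π u) := by
        rw [← Finset.sum_add_distrib]
        refine Finset.sum_congr rfl fun u _ => ?_
        rw [← Finset.sum_add_distrib]
        exact Finset.sum_congr rfl fun v _ => by ring
      _ = 4 * D := by rw [h3, h4]; ring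
  have hNle : N ≤ 2 * Real.sqrt A * Real.sqrt D := by
    calc N ≤ Real.sqrt A * Real.sqrt S := hCS
      _ ≤ Real.sqrt A * Real.sqrt (4 * D) :=
        mul_le_mul_of_nonneg_left (Real.sqrt_le_sqrt hS4) (Real.sqrt_nonneg A)
      _ = 2 * Real.sqrt A * Real.sqrt D := by
        rw [Real.sqrt_mul (by norm_num), show (4:ℝ) = 2 ^ 2 by norm_num,
          Real.sqrt_sq (by norm_num)]
        ring
  rw [div_le_div_iff₀ hDpos (Real.sqrt_pos.2 hDpos)]
  calc N * Real.sqrt D ≤ (2 * Real.sqrt A * Real.sqrt D) * Real.sqrt D :=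
        mul_le_mul_of_nonneg_right hNle (Real.sqrt_nonneg D)
    _ = 2 * Real.sqrt A * D := by
        rw [mul_assoc, Real.mul_self_sqrt hDpos.le]
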